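/- In the free group F(A,B), for every integer n the element A^nBA^{-n}B^{-1} is the image of the commutator ABA⁻¹B⁻¹ under an endomorphism of F(A,B), but for |n| ≥ 2 there is no automorphism of F(A,B) carrying ABA⁻¹B⁻¹ to A^nBA^{-n}B^{-1}. -/

import Mathlib

abbrev F2 := FreeGroup Bool

def A : F2 := FreeGroup.of true

def B : F2 := FreeGroup.of false

/-- `(x, y)` is a basis (free generating pair) of the free group `F2 = F(A,B)`. -/
def IsBasis (x y : F2) : Prop := ∃ e : F2 ≃* F2, e A = x ∧ e B = y

/-- `w` is primitive: it is part of some basis of `F2`. -/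
def IsPrimitive (w : F2) : Prop := ∃ x y : F2, IsBasis x y ∧ (w = x ∨ w = y)

open scoped commutatorElement

/-! ### The integer Heisenberg group -/

@[ext] structure Heis where
  a : ℤ
  b : ℤ
  c : ℤ

namespace Heis

instance : One Heis := ⟨⟨0,0,0⟩⟩
instance : Mul Heis := ⟨fun x y => ⟨x.a + y.a, x.b + y.b, x.c + y.c + x.a * y.b⟩⟩
instance : Inv Heis := ⟨fun x => ⟨-x.a, -x.b, -x.c + x.a * x.b⟩⟩

@[simp] lemma mul_a (x y : Heis) : (x * y).a = x.a + y.a := rfl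
@[simp] lemma mul_b (x y : Heis) : (x * y).b = x.b + y.b := rfl
@[simp] lemma mul_c (x y : Heis) : (x * y).c = x.c + y.c + x.a * y.b := rfl
@[simp] lemma one_a : (1 : Heis).a = 0 := rfl
@[simp] lemma one_b : (1 : Heis).b = 0 := rfl
@[simp] lemma one_c : (1 : Heis).c = 0 := rfl
@[simp] lemma inv_a (x : Heis) : (x⁻¹).a = -x.a := rfl
@[simp] lemma inv_b (x : Heis) : (x⁻¹).b = -x.b := rfl
@[simp] lemma inv_c (x : Heis) : (x⁻¹).c = -x.c + x.a * x.b := rfl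

instance : Group Heis where
  mul_assoc x y z := by ext <;> simp <;> try ring
  one_mul x := by ext <;> simp
  mul_one x := by ext <;> simp
  inv_mul_cancel x := by ext <;> simp <;> try ring

lemma z_zpow (k : ℤ) (m : ℤ) : (⟨0,0,k⟩ : Heis) ^ m = ⟨0,0,k*m⟩ := by
  induction m using Int.induction_on with
  | zero => ext <;> simp
  | succ i ih => rw [zpow_add, ih, zpow_one]; ext <;> simp <;> try ring
  | pred i ih => rw [zpow_sub, ih, zpow_one]; ext <;> simp <;> try ring

lemma x_zpow (m : ℤ) : (⟨1,0,0⟩ : Heis) ^ m = ⟨m,0,0⟩ := by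
  induction m using Int.induction_on with
  | zero => ext <;> simp
  | succ i ih => rw [zpow_add, ih, zpow_one]; ext <;> simp <;> try ring
  | pred i ih => rw [zpow_sub, ih, zpow_one]; ext <;> simp <;> try ring

/-- Elements with vanishing off-center coordinates are central. -/
lemma central {x : Heis} (ha : x.a = 0) (hb : x.b = 0) (y : Heis) : x * y = y * x := by
  ext <;> simp [ha, hb] <;> try ring

lemma commutator_central (x y : Heis) : ⁅x, y⁆.a = 0 ∧ ⁅x, y⁆.b = 0 := by
  constructor <;> simp [commutatorElement_def] <;> try ring

/-- The subgroup of central elements (vanishing `a,b` coordinates). -/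
def K : Subgroup Heis where
  carrier := {z | z.a = 0 ∧ z.b = 0}
  one_mem' := ⟨rfl, rfl⟩
  mul_mem' := by rintro x y ⟨hx1, hx2⟩ ⟨hy1, hy2⟩; exact ⟨by simp [hx1, hy1], by simp [hx2, hy2]⟩
  inv_mem' := by rintro x ⟨hx1, hx2⟩; exact ⟨by simp [hx1], by simp [hx2]⟩

lemma derived_le_K : ⁅(⊤ : Subgroup Heis), (⊤ : Subgroup Heis)⁆ ≤ K := by
  rw [Subgroup.commutator_le]
  intro p _ q _
  exact commutator_central p q

end Heis

/-! ### The homomorphism `ρ : F2 →* Heis` -/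

noncomputable def rho : F2 →* Heis :=
  FreeGroup.lift (fun t => if t then ⟨1,0,0⟩ else ⟨0,1,0⟩)

@[simp] lemma rho_A : rho A = ⟨1,0,0⟩ := by simp [rho, A]
@[simp] lemma rho_B : rho B = ⟨0,1,0⟩ := by simp [rho, B]

/-- The derived subgroup of `F2`. -/
def gamma1 : Subgroup F2 := ⁅(⊤ : Subgroup F2), (⊤ : Subgroup F2)⁆

/-- The second term of the lower central series of `F2`. -/
def gamma2 : Subgroup F2 := ⁅gamma1, (⊤ : Subgroup F2)⁆

lemma rho_gamma2_eq_one {u : F2} (hu : u ∈ gamma2) : rho u = 1 := by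
  have h1 : (gamma2.map rho) ≤ ⊥ := by
    rw [gamma2, gamma1, Subgroup.map_commutator, Subgroup.map_commutator]
    rw [Subgroup.commutator_le]
    intro g hg h _
    have hg' : g ∈ ⁅(⊤ : Subgroup Heis), (⊤ : Subgroup Heis)⁆ :=
      Subgroup.commutator_mono le_top le_top hg
    have h0 := Heis.derived_le_K hg'
    simp only [Subgroup.mem_bot]
    rw [commutatorElement_eq_one_iff_commute]
    exact Heis.central h0.1 h0.2 h
  have : rho u ∈ gamma2.map rho := ⟨u, hu, rfl⟩
  simpa using h1 this

instance : gamma1.Normal := by unfold gamma1; infer_instance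
instance : gamma2.Normal := by unfold gamma2 gamma1; infer_instance

/-! ### The quotient `F2 ⧸ γ₂` and the generation lemma -/

noncomputable def pi : F2 →* F2 ⧸ gamma2 := QuotientGroup.mk' gamma2

/-- Images of commutators are central in `F2 ⧸ γ₂`. -/
lemma pi_comm_central (g h : F2) : pi ⁅g, h⁆ ∈ Subgroup.center (F2 ⧸ gamma2) := by
  rw [Subgroup.mem_center_iff]
  intro z
  obtain ⟨v, rfl⟩ : ∃ v, pi v = z := QuotientGroup.mk'_surjective gamma2 z
  have hmem : ⁅⁅g, h⁆, v⁆ ∈ gamma2 :=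
    Subgroup.commutator_mem_commutator
      (Subgroup.commutator_mem_commutator (Subgroup.mem_top g) (Subgroup.mem_top h))
      (Subgroup.mem_top v)
  have h1 : pi ⁅⁅g, h⁆, v⁆ = 1 := by
    exact (QuotientGroup.eq_one_iff _).mpr hmem
  rw [map_commutatorElement] at h1
  exact (commutatorElement_eq_one_iff_commute.mp h1).eq.symm

def c0 : F2 := A * B * A⁻¹ * B⁻¹

lemma c0_eq : c0 = ⁅A, B⁆ := by
  simp [c0, commutatorElement_def, mul_assoc]

/-- All commutators land in the cyclic subgroup generated by `π ⁅A,B⁆`. -/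
lemma comm_mem_zpowers (x y : F2) : pi ⁅x, y⁆ ∈ Subgroup.zpowers (pi c0) := by
  have hcen : ∀ (g h : F2) (z : F2 ⧸ gamma2), z * pi ⁅g, h⁆ = pi ⁅g, h⁆ * z := by
    intro g h z
    exact Subgroup.mem_center_iff.mp (pi_comm_central g h) z
  have Hmul : ∀ u v w : F2, pi ⁅u * v, w⁆ = pi ⁅u, w⁆ * pi ⁅v, w⁆ := by
    intro u v w
    have hid : ⁅u * v, w⁆ = u * ⁅v, w⁆ * u⁻¹ * ⁅u, w⁆ := by group
    rw [hid]
    simp only [map_mul, map_inv]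
    rw [mul_assoc (pi u), ← hcen v w ((pi u)⁻¹), ← mul_assoc,
      mul_inv_cancel (pi u), one_mul]
    exact hcen u w _
  have Hinv : ∀ u w : F2, pi ⁅u⁻¹, w⁆ = (pi ⁅u, w⁆)⁻¹ := by
    intro u w
    have hid : ⁅u⁻¹, w⁆ = u⁻¹ * ⁅w, u⁆ * u := by group
    rw [hid]
    simp only [map_mul, map_inv]
    rw [mul_assoc, ← hcen w u (pi u), ← mul_assoc, inv_mul_cancel (pi u), one_mul,
      ← commutatorElement_inv, map_inv]
  have Hswap : ∀ u w : F2, pi ⁅u, w⁆ = (pi ⁅w, u⁆)⁻¹ := by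
    intro u w
    rw [← map_inv, commutatorElement_inv]
  have base : ∀ s t : Bool, pi ⁅FreeGroup.of s, FreeGroup.of t⁆ ∈ Subgroup.zpowers (pi c0) := by
    intro s t
    rw [c0_eq]
    cases s <;> cases t
    · rw [commutatorElement_self, map_one]; exact Subgroup.one_mem _
    · -- ⁅B, A⁆ = ⁅A, B⁆⁻¹
      rw [show (FreeGroup.of false : F2) = B from rfl, show (FreeGroup.of true : F2) = A from rfl]
      rw [Hswap]
      exact Subgroup.inv_mem _ (Subgroup.mem_zpowers _)
    · rw [show (FreeGroup.of false : F2) = B from rfl, show (FreeGroup.of true : F2) = A from rfl]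
      exact Subgroup.mem_zpowers _
    · rw [commutatorElement_self, map_one]; exact Subgroup.one_mem _
  have inner : ∀ s : Bool, ∀ y : F2, pi ⁅FreeGroup.of s, y⁆ ∈ Subgroup.zpowers (pi c0) := by
    intro s y
    induction y using FreeGroup.induction_on with
    | C1 => rw [commutatorElement_one_right, map_one]; exact Subgroup.one_mem _
    | of t => exact base s t
    | inv_of t _ =>
      rw [Hswap, Hinv]
      exact Subgroup.inv_mem _ (Subgroup.inv_mem _ (base t s))
    | mul y₁ y₂ ih₁ ih₂ =>
      rw [Hswap, Hmul, Hswap y₁, Hswap y₂]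
      exact Subgroup.inv_mem _ (Subgroup.mul_mem _
        (Subgroup.inv_mem _ ih₁) (Subgroup.inv_mem _ ih₂))
  induction x using FreeGroup.induction_on with
  | C1 => rw [commutatorElement_one_left, map_one]; exact Subgroup.one_mem _
  | of s => exact inner s y
  | inv_of s _ => rw [Hinv]; exact Subgroup.inv_mem _ (inner s y)
  | mul x₁ x₂ ih₁ ih₂ => rw [Hmul]; exact Subgroup.mul_mem _ ih₁ ih₂

/-- Generation lemma: every element of the derived subgroup is `c0^m` mod `γ₂`. -/
lemma gen_lemma {w : F2} (hw : w ∈ gamma1) : ∃ m : ℤ, (c0 ^ m)⁻¹ * w ∈ gamma2 := by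
  have hle : gamma1 ≤ Subgroup.comap pi (Subgroup.zpowers (pi c0)) := by
    rw [gamma1, Subgroup.commutator_le]
    intro g _ h _
    exact comm_mem_zpowers g h
  obtain ⟨m, hm⟩ := hle hw
  refine ⟨m, ?_⟩
  have h2 : pi (c0 ^ m) = pi w := by rw [map_zpow]; exact hm
  exact (QuotientGroup.eq).mp h2

lemma rho_c0 : rho c0 = ⟨0, 0, 1⟩ := by
  simp only [c0, map_mul, map_inv, rho_A, rho_B]
  ext <;> simp

lemma rho_target (n : ℤ) : rho (A ^ n * B * A ^ (-n) * B⁻¹) = ⟨0, 0, n⟩ := by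
  simp only [map_mul, map_inv, map_zpow, rho_A, rho_B, Heis.x_zpow]
  ext <;> simp

lemma map_gamma1 (e : F2 ≃* F2) : Subgroup.map e.toMonoidHom gamma1 = gamma1 := by
  rw [gamma1, Subgroup.map_commutator,
    Subgroup.map_top_of_surjective _ e.surjective]

lemma map_gamma2 (e : F2 ≃* F2) : Subgroup.map e.toMonoidHom gamma2 = gamma2 := by
  rw [gamma2, Subgroup.map_commutator, Subgroup.map_top_of_surjective _ e.surjective]
  rw [show Subgroup.map e.toMonoidHom gamma1 = gamma1 from map_gamma1 e]

theorem stmt_6 (n : ℤ) :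
    (∃ φ : F2 →* F2, φ (A * B * A⁻¹ * B⁻¹) = A ^ n * B * A ^ (-n) * B⁻¹) ∧
      (2 ≤ |n| → ¬ ∃ φ : F2 ≃* F2, φ (A * B * A⁻¹ * B⁻¹) = A ^ n * B * A ^ (-n) * B⁻¹) := by
  constructor
  · refine ⟨FreeGroup.lift (fun t => if t then A ^ n else B), ?_⟩
    simp [A, B, zpow_neg]
  · intro hn ⟨φ, hφ⟩
    -- `w := φ⁻¹ c0` lies in the derived subgroup
    have hc0 : c0 ∈ gamma1 := by
      rw [c0_eq, gamma1]
      exact Subgroup.commutator_mem_commutator (Subgroup.mem_top A) (Subgroup.mem_top B)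
    have hw : φ.symm c0 ∈ gamma1 := by
      rw [← map_gamma1 φ.symm]
      exact ⟨c0, hc0, rfl⟩
    obtain ⟨m, hm⟩ := gen_lemma hw
    set u : F2 := (c0 ^ m)⁻¹ * φ.symm c0 with hu
    have hdecomp : φ.symm c0 = c0 ^ m * u := by rw [hu]; group
    -- apply φ
    have happ : c0 = (φ c0) ^ m * φ u := by
      have := congrArg φ hdecomp
      rw [MulEquiv.apply_symm_apply, map_mul, map_zpow] at this
      exact this
    have hφu : φ u ∈ gamma2 := by
      rw [← map_gamma2 φ]
      exact ⟨u, hm, rfl⟩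
    -- apply ρ
    have hρ : rho c0 = (rho (φ c0)) ^ m * rho (φ u) := by
      have h := congrArg rho happ
      rwa [map_mul, map_zpow] at h
    rw [rho_c0, rho_gamma2_eq_one hφu, mul_one, show φ c0 = A ^ n * B * A ^ (-n) * B⁻¹ from by
        rw [show φ c0 = φ (A * B * A⁻¹ * B⁻¹) from by rw [c0]]; exact hφ,
      rho_target, Heis.z_zpow] at hρ
    have h1 : (1 : ℤ) = n * m := congrArg Heis.c hρ
    have : n = 1 ∨ n = -1 := Int.isUnit_iff.mp (IsUnit.of_mul_eq_one (a := n) m h1.symm)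
    rcases this with h | h <;> rw [h] at hn <;> simp at hn
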